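/- arXiv:2510.08446 — 4 statements merged into one kernel-verified Lean document; each statement's English description precedes it below -/
import Mathlib

section
/- Let h ∈ F2^{c×n} be a parity-check matrix, p ∈ (0,1), and define μ(x,A) ∝ (p/(1-p))^{|A|} · 1[A ⊆ E(x)] for x ∈ F2^n and A ⊆ [c], where E(x) is the set of checks i with (hx)_i = 0. Then the marginal of μ over A equals the Gibbs distribution π(x) ∝ e^{-2β|hx|} where p = 1 - e^{-2β} and |hx| is the Hamming weight of hx. -/
/-- The marginal over cluster configurations of the FK-type joint measure for a
binary linear code equals (up to normalization) the Gibbs distribution. -/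
theorem stmt2 (c n : ℕ) (h : Matrix (Fin c) (Fin n) (ZMod 2))
    (β : ℝ) (hβ : 0 < β) (p : ℝ) (hp : p = 1 - Real.exp (-2 * β)) :
    ∃ C : ℝ, 0 < C ∧ ∀ x : Fin n → ZMod 2,
      ∑ A ∈ (Finset.univ : Finset (Fin c)).powerset,
        (p / (1 - p)) ^ A.card *
          (if A ⊆ Finset.univ.filter (fun i => h.mulVec x i = 0) then (1 : ℝ) else 0)
      = C * Real.exp (-2 * β *
          ((Finset.univ.filter (fun i => h.mulVec x i ≠ 0)).card : ℝ)) := by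
  have h1p : 1 - p = Real.exp (-2 * β) := by rw [hp]; ring
  have hexp : (0:ℝ) < Real.exp (-2 * β) := Real.exp_pos _
  have hr : 1 + p / (1 - p) = Real.exp (2 * β) := by
    rw [h1p]
    field_simp
    rw [← Real.exp_add]
    ring_nf
    rw [hp, Real.exp_zero]
    ring_nf
  refine ⟨Real.exp (2 * β * c), Real.exp_pos _, fun x => ?_⟩
  set E := Finset.univ.filter (fun i => h.mulVec x i = 0) with hE
  set r : ℝ := p / (1 - p) with hrdef
  have step1 : ∑ A ∈ (Finset.univ : Finset (Fin c)).powerset,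
      r ^ A.card * (if A ⊆ E then (1 : ℝ) else 0)
      = ∑ A ∈ E.powerset, r ^ A.card := by
    have key : ∀ A : Finset (Fin c), r ^ A.card * (if A ⊆ E then (1:ℝ) else 0)
        = if A ⊆ E then r ^ A.card else 0 := fun A => by split <;> simp
    rw [Finset.sum_congr rfl (fun A _ => key A), ← Finset.sum_filter]
    congr 1
    ext A; simp [Finset.mem_powerset, Finset.mem_filter]
  have step2 : ∑ A ∈ E.powerset, r ^ A.card = (1 + r) ^ E.card := by
    have := Finset.prod_add (fun _ : Fin c => r) (fun _ => (1:ℝ)) E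
    simp only [Finset.prod_const, one_pow, mul_one] at this
    rw [add_comm (1:ℝ) r, this]
  have hcard : E.card + (Finset.univ.filter (fun i => h.mulVec x i ≠ 0)).card = c := by
    rw [hE]
    rw [Finset.card_filter_add_card_filter_not]
    simp
  rw [step1, step2, hr, ← Real.exp_nat_mul, ← Real.exp_add]
  congr 1
  have : (E.card : ℝ) = (c : ℝ) - ((Finset.univ.filter (fun i => h.mulVec x i ≠ 0)).card : ℝ) := by
    have := hcard
    push_cast [← this]
    ring
  rw [this]; ring
end

section
/- With μ as above, the marginal of μ over x equals the code random-cluster distribution φ(A) ∝ (p/(1-p))^{|A|} · 2^{k(A)}, where k(A) = dim(ker(h_A)) and h_A is the row-submatrix of h indexed by A. -/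
/-- The marginal over error configurations of the FK-type joint measure for a
binary linear code equals (up to normalization) the code random-cluster
distribution φ(A) ∝ (p/(1-p))^|A| · 2^{dim ker h_A}. -/
theorem stmt3 (c n : ℕ) (h : Matrix (Fin c) (Fin n) (ZMod 2))
    (p : ℝ) (hp0 : 0 < p) (hp1 : p < 1) :
    ∃ C : ℝ, 0 < C ∧ ∀ A ∈ (Finset.univ : Finset (Fin c)).powerset,
      ∑ x : Fin n → ZMod 2,
        (p / (1 - p)) ^ A.card *
          (if A ⊆ Finset.univ.filter (fun i => h.mulVec x i = 0) then (1 : ℝ) else 0)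
      = C * ((p / (1 - p)) ^ A.card *
          2 ^ (Module.finrank (ZMod 2)
            ↥(LinearMap.ker (Matrix.of fun (i : {i // i ∈ A}) (j : Fin n) =>
                h i.1 j).mulVecLin))) := by
  refine ⟨1, one_pos, fun A _ => ?_⟩
  rw [one_mul]
  set M : Matrix {i // i ∈ A} (Fin n) (ZMod 2) :=
    Matrix.of fun (i : {i // i ∈ A}) (j : Fin n) => h i.1 j
  have hiff : ∀ x : Fin n → ZMod 2,
      (A ⊆ Finset.univ.filter (fun i => h.mulVec x i = 0)) ↔
      x ∈ LinearMap.ker M.mulVecLin := by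
    intro x
    constructor
    · intro hs
      rw [LinearMap.mem_ker]
      funext i
      have := hs i.2
      simp only [Finset.mem_filter] at this
      simpa [M, Matrix.mulVecLin_apply, Matrix.mulVec] using this.2
    · intro hk i hi
      rw [LinearMap.mem_ker] at hk
      have := congrFun hk ⟨i, hi⟩
      simp only [Finset.mem_filter, Finset.mem_univ, true_and]
      simpa [M, Matrix.mulVecLin_apply, Matrix.mulVec] using this
  have fI : Fintype ↥(LinearMap.ker M.mulVecLin) := Fintype.ofFinite _
  have hcard : (Finset.univ.filter (fun x : Fin n → ZMod 2 =>
      A ⊆ Finset.univ.filter (fun i => h.mulVec x i = 0))).card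
      = 2 ^ Module.finrank (ZMod 2) ↥(LinearMap.ker M.mulVecLin) := by
    have : (Finset.univ.filter (fun x : Fin n → ZMod 2 =>
        A ⊆ Finset.univ.filter (fun i => h.mulVec x i = 0)))
        = Finset.univ.filter (fun x => M.mulVecLin x = 0) := by
      apply Finset.filter_congr
      intro x _
      simpa [LinearMap.mem_ker] using hiff x
    rw [this, ← Fintype.card_subtype]
    rw [Fintype.card_congr (Equiv.subtypeEquivRight
      (fun x => (LinearMap.mem_ker (f := M.mulVecLin)).symm))]
    calc Fintype.card {x // x ∈ LinearMap.ker M.mulVecLin}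
        = Fintype.card (ZMod 2) ^ Module.finrank (ZMod 2)
            ↥(LinearMap.ker M.mulVecLin) := Module.card_eq_pow_finrank
      _ = 2 ^ _ := by rw [ZMod.card]
  rw [← Finset.mul_sum, Finset.sum_boole, hcard]
  push_cast
  ring
end

section
/- Let f be a flow for a distribution p with respect to a lazy, ergodic, reversible Markov chain P on a finite state space Ω. Then the mixing time of P satisfies τ(P) ≤ ln(2e / min_S p(S)) · ρ(f), where ρ(f) is the congestion of the flow. -/
open Matrix

namespace Stmt17Aux
variable {α : Type*} [DecidableEq α]

/-- suffix of `l` strictly after the last occurrence of `a` (junk if `a ∉ l`). -/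
def afterLast (a : α) : List α → List α
  | [] => []
  | b :: l => if a ∈ l then afterLast a l else l

lemma afterLast_suffix (a : α) : ∀ l : List α, a ∈ l → (a :: afterLast a l) <:+ l
  | b :: l, hm => by
    by_cases h : a ∈ l
    · simpa [afterLast, h] using ((afterLast_suffix a l h).trans (List.suffix_cons b l))
    · have hb : a = b := by rcases List.mem_cons.1 hm with h' | h'; exact h'; exact absurd h' h
      subst hb
      simp [afterLast, h]

lemma afterLast_length (a : α) : ∀ l : List α, (afterLast a l).length < l.length + 1
  | [] => by simp [afterLast]
  | b :: l => by
    by_cases h : a ∈ l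
    · simp only [afterLast, h, if_true]
      exact (afterLast_length a l).trans (by simp)
    · simp only [afterLast, h, if_false, List.length_cons]
      omega

lemma afterLast_not_mem (a : α) : ∀ l : List α, a ∈ l → a ∉ afterLast a l
  | b :: l, hm => by
    by_cases h : a ∈ l
    · simpa [afterLast, h] using afterLast_not_mem a l h
    · have hb : a = b := by rcases List.mem_cons.1 hm with h' | h'; exact h'; exact absurd h' h
      simp [afterLast, h]

/-- the next list to recurse on from `a :: l`. -/
def nextList (a : α) (l : List α) : List α := if a ∈ l then afterLast a l else l

lemma nextList_length (a : α) (l : List α) : (nextList a l).length ≤ l.length := by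
  unfold nextList
  by_cases h : a ∈ l
  · simpa [h] using Nat.lt_succ_iff.1 (afterLast_length a l)
  · simp [h]

lemma nextList_suffix (a : α) (l : List α) : (a :: nextList a l) <:+ (a :: l) := by
  unfold nextList
  by_cases h : a ∈ l
  · simpa [h] using (afterLast_suffix a l h).trans (List.suffix_cons a l)
  · simp [h]

lemma nextList_not_mem (a : α) (l : List α) : a ∉ nextList a l := by
  unfold nextList
  by_cases h : a ∈ l
  · simpa [h] using afterLast_not_mem a l h
  · simpa [h] using h

/-- loop erasure -/
def loopErase : List α → List α
  | [] => []
  | a :: l => a :: loopErase (nextList a l)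
termination_by l => l.length
decreasing_by simp only [List.length_cons]; exact Nat.lt_succ_of_le (nextList_length _ _)

@[simp] lemma loopErase_nil : loopErase ([] : List α) = [] := by simp [loopErase]

lemma loopErase_cons (a : α) (l : List α) :
    loopErase (a :: l) = a :: loopErase (nextList a l) := by
  conv_lhs => rw [loopErase]

lemma loopErase_head? (l : List α) : (loopErase l).head? = l.head? := by
  cases l with
  | nil => simp
  | cons a l => rw [loopErase_cons]; simp

lemma loopErase_subset : ∀ l : List α, loopErase l ⊆ l
  | [] => by simp
  | a :: l => by
    rw [loopErase_cons]
    intro x hx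
    rcases List.mem_cons.1 hx with h | h
    · simp [h]
    · have := loopErase_subset (nextList a l) h
      exact (nextList_suffix a l).subset (List.mem_cons_of_mem a this)
termination_by l => l.length
decreasing_by simp only [List.length_cons]; exact Nat.lt_succ_of_le (nextList_length _ _)

lemma loopErase_nodup : ∀ l : List α, (loopErase l).Nodup
  | [] => by simp
  | a :: l => by
    rw [loopErase_cons]
    refine List.nodup_cons.2 ⟨fun hmem => ?_, loopErase_nodup (nextList a l)⟩
    exact nextList_not_mem a l (loopErase_subset _ hmem)
termination_by l => l.length
decreasing_by simp only [List.length_cons]; exact Nat.lt_succ_of_le (nextList_length _ _)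

lemma loopErase_length : ∀ l : List α, (loopErase l).length ≤ l.length
  | [] => by simp
  | a :: l => by
    rw [loopErase_cons]
    simpa using (loopErase_length (nextList a l)).trans (nextList_length a l)
termination_by l => l.length
decreasing_by simp only [List.length_cons]; exact Nat.lt_succ_of_le (nextList_length _ _)


lemma getLast?_of_suffix {m l : List α} (h : m <:+ l) (hm : m ≠ []) :
    m.getLast? = l.getLast? := by
  obtain ⟨u, rfl⟩ := h
  rw [List.getLast?_append_of_ne_nil]; exact hm

/-- consecutive-pair (edge) list of a path -/
def edges (l : List α) : List (α × α) := l.zip l.tail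

lemma edges_nil : edges ([] : List α) = [] := rfl

lemma edges_cons_cons (a b : α) (l : List α) :
    edges (a :: b :: l) = (a, b) :: edges (b :: l) := rfl

lemma edges_tail_suffix (b : α) (t : List α) : edges t <:+ edges (b :: t) := by
  cases t with
  | nil => simp [edges]
  | cons c t' => rw [edges_cons_cons]; exact List.suffix_cons _ _

lemma edges_suffix : ∀ {m l : List α}, m <:+ l → edges m <:+ edges l := by
  intro m l h
  obtain ⟨u, rfl⟩ := h
  induction u with
  | nil => simp
  | cons b u ih => exact ih.trans (edges_tail_suffix b (u ++ m))

lemma nodup_edges : ∀ {l : List α}, l.Nodup → (edges l).Nodup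
  | [], _ => by simp [edges]
  | [a], _ => by simp [edges]
  | a :: b :: t, h => by
    rw [edges_cons_cons]
    have h1 : a ∉ b :: t := (List.nodup_cons.1 h).1
    refine List.nodup_cons.2 ⟨fun hmem => ?_, nodup_edges (List.nodup_cons.1 h).2⟩
    exact h1 ((List.of_mem_zip hmem).1)

lemma chain'_of_edges {r : α → α → Prop} :
    ∀ {l : List α}, (∀ e ∈ edges l, r e.1 e.2) → l.Chain' r
  | [], _ => List.isChain_nil
  | [a], _ => List.isChain_singleton a
  | a :: b :: t, h => by
    rw [List.Chain', List.isChain_cons_cons]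
    refine ⟨h (a, b) (by rw [edges_cons_cons]; exact List.mem_cons_self), ?_⟩
    exact chain'_of_edges (fun e he => h e (by rw [edges_cons_cons]; exact List.mem_cons_of_mem _ he))

lemma edges_of_chain' {r : α → α → Prop} :
    ∀ {l : List α}, l.Chain' r → ∀ e ∈ edges l, r e.1 e.2
  | [], _ => by simp [edges]
  | [a], _ => by simp [edges]
  | a :: b :: t, h => by
    rw [List.Chain', List.isChain_cons_cons] at h
    intro e he
    rw [edges_cons_cons, List.mem_cons] at he
    rcases he with rfl | he
    · exact h.1
    · exact edges_of_chain' h.2 e he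

lemma edges_length (l : List α) : (edges l).length = l.length - 1 := by
  simp [edges]

lemma loopErase_ne_nil {l : List α} (h : l ≠ []) : loopErase l ≠ [] := by
  cases l with
  | nil => exact absurd rfl h
  | cons a l => rw [loopErase_cons]; simp

lemma loopErase_getLast? : ∀ l : List α, (loopErase l).getLast? = l.getLast?
  | [] => by simp
  | a :: l => by
    rw [loopErase_cons]
    set m := nextList a l with hm
    have hsuf : (a :: m) <:+ (a :: l) := nextList_suffix a l
    by_cases hnil : m = []
    · rw [hnil, loopErase_nil]
      exact getLast?_of_suffix (by rw [hnil] at hsuf; exact hsuf) (by simp)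
    · have h1 : loopErase m ≠ [] := loopErase_ne_nil hnil
      have h2 : (loopErase m).getLast? = m.getLast? := loopErase_getLast? m
      have h3 : m <:+ a :: l := (List.suffix_cons a m).trans hsuf
      have h4 : m.getLast? = (a :: l).getLast? := getLast?_of_suffix h3 hnil
      have h5 : (loopErase m).getLast? = (a :: loopErase m).getLast? :=
        getLast?_of_suffix (List.suffix_cons a _) h1
      rw [← h5, h2, h4]
termination_by l => l.length
decreasing_by simp only [List.length_cons]; exact Nat.lt_succ_of_le (nextList_length _ _)

lemma loopErase_edges_subset : ∀ l : List α, edges (loopErase l) ⊆ edges l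
  | [] => by simp
  | a :: l => by
    rw [loopErase_cons]
    have hsuf : (a :: nextList a l) <:+ (a :: l) := nextList_suffix a l
    intro e he
    cases hle : loopErase (nextList a l) with
    | nil => rw [hle] at he; simp [edges] at he
    | cons c w =>
      rw [hle, edges_cons_cons, List.mem_cons] at he
      have hhead : (nextList a l).head? = some c := by
        rw [← loopErase_head? (nextList a l), hle]; rfl
      rcases he with rfl | he
      · cases hmm : nextList a l with
        | nil => rw [hmm] at hhead; simp at hhead
        | cons d m' =>
          have hdc : d = c := by rw [hmm] at hhead; injection hhead
          have h0 : (a, c) ∈ edges (a :: nextList a l) := by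
            rw [hmm, hdc, edges_cons_cons]; exact List.mem_cons_self
          exact (edges_suffix hsuf).subset h0
      · have h1 : e ∈ edges (nextList a l) :=
          loopErase_edges_subset (nextList a l) (by rw [hle]; exact he)
        exact (edges_suffix ((List.suffix_cons a _).trans hsuf)).subset h1
termination_by l => l.length
decreasing_by simp only [List.length_cons]; exact Nat.lt_succ_of_le (nextList_length _ _)

lemma telescope (φ : α → ℝ) : ∀ (l : List α) (a b : α), l.head? = some a → l.getLast? = some b →
    ((edges l).map (fun e => φ e.1 - φ e.2)).sum = φ a - φ b
  | [], a, b, ha, hb => by simp at ha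
  | [x], a, b, ha, hb => by
    simp only [List.head?_cons, Option.some.injEq] at ha
    simp only [List.getLast?_singleton, Option.some.injEq] at hb
    subst ha; subst hb; simp [edges]
  | x :: y :: t, a, b, ha, hb => by
    simp only [List.head?_cons, Option.some.injEq] at ha
    rw [List.getLast?_cons_cons] at hb
    rw [edges_cons_cons, List.map_cons, List.sum_cons,
      telescope φ (y :: t) y b rfl hb, ← ha]
    ring

lemma list_sq_sum_le (l : List ℝ) : (l.sum) ^ 2 ≤ (l.length : ℝ) * (l.map (fun x => x ^ 2)).sum := by
  have h1 : l.sum = ∑ i : Fin l.length, l.get i := by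
    rw [← List.sum_ofFn]; congr 1; exact (List.ofFn_get l).symm
  have h2 : (l.map (fun x => x ^ 2)).sum = ∑ i : Fin l.length, (l.get i) ^ 2 := by
    rw [← List.sum_ofFn]
    congr 1
    conv_lhs => rw [← List.ofFn_get l]
    rw [List.map_ofFn]
    rfl
  rw [h1, h2]
  have := sq_sum_le_card_mul_sum_sq (s := (Finset.univ : Finset (Fin l.length)))
    (f := fun i => l.get i)
  simpa using this

section Analysis
variable {Ω : Type*} [Fintype Ω]

/-- weighted inner product -/
def ip (p φ ψ : Ω → ℝ) : ℝ := ∑ x, p x * (φ x * ψ x)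

/-- Markov operator -/
def pop (P : Ω → Ω → ℝ) (φ : Ω → ℝ) (x : Ω) : ℝ := ∑ y, P x y * φ y

lemma ip_self_nonneg (p φ : Ω → ℝ) (hp : ∀ x, 0 < p x) : 0 ≤ ip p φ φ :=
  Finset.sum_nonneg fun x _ => mul_nonneg (hp x).le (mul_self_nonneg _)

variable (P : Ω → Ω → ℝ) (p : Ω → ℝ)

lemma stationary (hrev : ∀ x y, p x * P x y = p y * P y x) (hProw : ∀ x, ∑ y, P x y = 1)
    (y : Ω) : ∑ x, p x * P x y = p y := by
  calc ∑ x, p x * P x y = ∑ x, p y * P y x := by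
        refine Finset.sum_congr rfl fun x _ => hrev x y
    _ = p y * ∑ x, P y x := by rw [Finset.mul_sum]
    _ = p y := by rw [hProw y, mul_one]

lemma pop_mean_zero (hrev : ∀ x y, p x * P x y = p y * P y x) (hProw : ∀ x, ∑ y, P x y = 1)
    (φ : Ω → ℝ) (h : ∑ x, p x * φ x = 0) : ∑ x, p x * pop P φ x = 0 := by
  calc ∑ x, p x * pop P φ x = ∑ x, ∑ y, p x * P x y * φ y := by
        refine Finset.sum_congr rfl fun x _ => ?_
        rw [pop, Finset.mul_sum]
        exact Finset.sum_congr rfl fun y _ => by ring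
    _ = ∑ y, (∑ x, p x * P x y) * φ y := by
        rw [Finset.sum_comm]
        exact Finset.sum_congr rfl fun y _ => by rw [Finset.sum_mul]
    _ = ∑ y, p y * φ y := by
        refine Finset.sum_congr rfl fun y _ => by rw [stationary P p hrev hProw y]
    _ = 0 := h

lemma ip_pop_expand (φ ψ : Ω → ℝ) :
    ip p φ (pop P ψ) = ∑ x, ∑ y, (p x * P x y) * (φ x * ψ y) := by
  unfold ip pop
  refine Finset.sum_congr rfl fun x _ => ?_
  rw [Finset.mul_sum, Finset.mul_sum]
  exact Finset.sum_congr rfl fun y _ => by ring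

lemma ip_pop_symm (hrev : ∀ x y, p x * P x y = p y * P y x) (φ ψ : Ω → ℝ) :
    ip p φ (pop P ψ) = ip p ψ (pop P φ) := by
  rw [ip_pop_expand, ip_pop_expand, Finset.sum_comm]
  refine Finset.sum_congr rfl fun x _ => Finset.sum_congr rfl fun y _ => ?_
  rw [hrev y x]
  ring

lemma dirichlet_identity (hrev : ∀ x y, p x * P x y = p y * P y x)
    (hProw : ∀ x, ∑ y, P x y = 1) (φ : Ω → ℝ) :
    ip p φ φ - ip p φ (pop P φ) = (1/2) * ∑ x, ∑ y, p x * P x y * (φ x - φ y)^2 := by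
  have hterm : ∀ x y : Ω, p x * P x y * (φ x - φ y)^2
      = p x * P x y * (φ x)^2 + p x * P x y * (φ y)^2 - 2 * ((p x * P x y) * (φ x * φ y)) := by
    intro x y; ring
  have hA : ∑ x, ∑ y, p x * P x y * (φ x)^2 = ip p φ φ := by
    unfold ip
    refine Finset.sum_congr rfl fun x _ => ?_
    calc ∑ y, p x * P x y * (φ x)^2 = (p x * (φ x * φ x)) * ∑ y, P x y := by
          rw [Finset.mul_sum]; exact Finset.sum_congr rfl fun y _ => by ring
      _ = p x * (φ x * φ x) := by rw [hProw x, mul_one]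
  have hB : ∑ x, ∑ y, p x * P x y * (φ y)^2 = ip p φ φ := by
    rw [Finset.sum_comm]
    unfold ip
    refine Finset.sum_congr rfl fun y _ => ?_
    calc ∑ x, p x * P x y * (φ y)^2 = (∑ x, p x * P x y) * (φ y * φ y) := by
          rw [Finset.sum_mul]; exact Finset.sum_congr rfl fun x _ => by ring
      _ = p y * (φ y * φ y) := by rw [stationary P p hrev hProw y]
  have hC : ∑ x, ∑ y, (p x * P x y) * (φ x * φ y) = ip p φ (pop P φ) :=
    (ip_pop_expand P p φ φ).symm
  have hsplit : ∑ x, ∑ y, p x * P x y * (φ x - φ y)^2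
      = (∑ x, ∑ y, p x * P x y * (φ x)^2) + (∑ x, ∑ y, p x * P x y * (φ y)^2)
        - 2 * ∑ x, ∑ y, (p x * P x y) * (φ x * φ y) := by
    simp only [hterm, Finset.sum_sub_distrib, Finset.sum_add_distrib, Finset.mul_sum]
  rw [hsplit, hA, hB, hC]
  ring

lemma offdiag_rowsum [DecidableEq Ω] (hProw : ∀ x, ∑ y, P x y = 1) (x : Ω) :
    ∑ y, (if x = y then 0 else P x y) = 1 - P x x := by
  have : ∀ y, (if x = y then 0 else P x y) = P x y - (if x = y then P x y else 0) := by
    intro y; by_cases h : x = y <;> simp [h]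
  rw [Finset.sum_congr rfl fun y _ => this y, Finset.sum_sub_distrib, hProw x,
    show ∑ y, (if x = y then P x y else 0) = P x x by simp]

lemma offdiag_colsum [DecidableEq Ω] (hrev : ∀ x y, p x * P x y = p y * P y x)
    (hProw : ∀ x, ∑ y, P x y = 1) (y : Ω) :
    ∑ x, p x * (if x = y then 0 else P x y) = p y * (1 - P y y) := by
  have : ∀ x, p x * (if x = y then 0 else P x y)
      = p x * P x y - (if x = y then p x * P x y else 0) := by
    intro x; by_cases h : x = y <;> simp [h]
  rw [Finset.sum_congr rfl fun x _ => this x, Finset.sum_sub_distrib,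
    stationary P p hrev hProw y]
  have h2 : ∑ x, (if x = y then p x * P x y else 0) = p y * P y y := by
    rw [Finset.sum_ite_eq' Finset.univ y (fun x => p x * P x y)]
    simp
  rw [h2]
  ring

lemma psd [DecidableEq Ω] (hp : ∀ x, 0 < p x) (hPnn : ∀ x y, 0 ≤ P x y)
    (hProw : ∀ x, ∑ y, P x y = 1) (hlazy : ∀ x, (1:ℝ)/2 ≤ P x x)
    (hrev : ∀ x y, p x * P x y = p y * P y x) (φ : Ω → ℝ) :
    0 ≤ ip p φ (pop P φ) := by
  have hid := dirichlet_identity P p hrev hProw φ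
  have hE2 : ∑ x, ∑ y, p x * P x y * (φ x - φ y)^2 ≤ 2 * ip p φ φ := by
    have step1 : ∑ x, ∑ y, p x * P x y * (φ x - φ y)^2
        = ∑ x, ∑ y, p x * (if x = y then 0 else P x y) * (φ x - φ y)^2 := by
      refine Finset.sum_congr rfl fun x _ => Finset.sum_congr rfl fun y _ => ?_
      by_cases h : x = y <;> simp [h]
    have step2 : ∑ x, ∑ y, p x * (if x = y then 0 else P x y) * (φ x - φ y)^2
        ≤ ∑ x, ∑ y, p x * (if x = y then 0 else P x y) * (2 * (φ x)^2 + 2 * (φ y)^2) := by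
      refine Finset.sum_le_sum fun x _ => Finset.sum_le_sum fun y _ => ?_
      have hnn : 0 ≤ p x * (if x = y then 0 else P x y) :=
        mul_nonneg (hp x).le (by by_cases h : x = y <;> simp [h, hPnn x y])
      have : (φ x - φ y)^2 ≤ 2 * (φ x)^2 + 2 * (φ y)^2 := by nlinarith [sq_nonneg (φ x + φ y)]
      exact mul_le_mul_of_nonneg_left this hnn
    have step3 : ∑ x, ∑ y, p x * (if x = y then 0 else P x y) * (2 * (φ x)^2 + 2 * (φ y)^2)
        = 2 * (∑ x, p x * (φ x)^2 * (1 - P x x)) + 2 * (∑ y, (φ y)^2 * (p y * (1 - P y y))) := by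
      have hx : ∀ x, ∑ y, p x * (if x = y then 0 else P x y) * (2 * (φ x)^2)
          = 2 * (p x * (φ x)^2 * (1 - P x x)) := by
        intro x
        calc ∑ y, p x * (if x = y then 0 else P x y) * (2 * (φ x)^2)
            = (p x * (2 * (φ x)^2)) * ∑ y, (if x = y then 0 else P x y) := by
              rw [Finset.mul_sum]; exact Finset.sum_congr rfl fun y _ => by ring
          _ = 2 * (p x * (φ x)^2 * (1 - P x x)) := by rw [offdiag_rowsum P hProw x]; ring
      have hy : ∑ x, ∑ y, p x * (if x = y then 0 else P x y) * (2 * (φ y)^2)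
          = 2 * (∑ y, (φ y)^2 * (p y * (1 - P y y))) := by
        rw [Finset.sum_comm, Finset.mul_sum]
        refine Finset.sum_congr rfl fun y _ => ?_
        calc ∑ x, p x * (if x = y then 0 else P x y) * (2 * (φ y)^2)
            = (2 * (φ y)^2) * ∑ x, p x * (if x = y then 0 else P x y) := by
              rw [Finset.mul_sum]; exact Finset.sum_congr rfl fun x _ => by ring
          _ = 2 * ((φ y)^2 * (p y * (1 - P y y))) := by
              rw [offdiag_colsum P p hrev hProw y]; ring
      calc ∑ x, ∑ y, p x * (if x = y then 0 else P x y) * (2 * (φ x)^2 + 2 * (φ y)^2)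
          = (∑ x, ∑ y, p x * (if x = y then 0 else P x y) * (2 * (φ x)^2))
            + ∑ x, ∑ y, p x * (if x = y then 0 else P x y) * (2 * (φ y)^2) := by
            rw [← Finset.sum_add_distrib]
            refine Finset.sum_congr rfl fun x _ => ?_
            rw [← Finset.sum_add_distrib]
            exact Finset.sum_congr rfl fun y _ => by ring
        _ = _ := by
            rw [hy, Finset.sum_congr rfl fun x _ => hx x, ← Finset.mul_sum]
    have bound1 : ∑ x, p x * (φ x)^2 * (1 - P x x) ≤ (1/2) * ip p φ φ := by
      unfold ip
      rw [Finset.mul_sum]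
      refine Finset.sum_le_sum fun x _ => ?_
      have h1 : 1 - P x x ≤ 1/2 := by linarith [hlazy x]
      have h2 : 0 ≤ p x * (φ x)^2 := mul_nonneg (hp x).le (sq_nonneg _)
      calc p x * (φ x)^2 * (1 - P x x) ≤ p x * (φ x)^2 * (1/2) :=
            mul_le_mul_of_nonneg_left h1 h2
        _ = 1/2 * (p x * (φ x * φ x)) := by ring
    have bound2 : ∑ y, (φ y)^2 * (p y * (1 - P y y)) ≤ (1/2) * ip p φ φ := by
      unfold ip
      rw [Finset.mul_sum]
      refine Finset.sum_le_sum fun y _ => ?_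
      have h1 : 1 - P y y ≤ 1/2 := by linarith [hlazy y]
      have h2 : 0 ≤ (φ y)^2 * p y := mul_nonneg (sq_nonneg _) (hp y).le
      calc (φ y)^2 * (p y * (1 - P y y)) = ((φ y)^2 * p y) * (1 - P y y) := by ring
        _ ≤ ((φ y)^2 * p y) * (1/2) := mul_le_mul_of_nonneg_left h1 h2
        _ = 1/2 * (p y * (φ y * φ y)) := by ring
    calc ∑ x, ∑ y, p x * P x y * (φ x - φ y)^2
        ≤ 2 * (∑ x, p x * (φ x)^2 * (1 - P x x)) + 2 * (∑ y, (φ y)^2 * (p y * (1 - P y y))) := by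
          rw [step1, ← step3]; exact step2
      _ ≤ 2 * ((1/2) * ip p φ φ) + 2 * ((1/2) * ip p φ φ) := by
          have := bound1; have := bound2; linarith
      _ = 2 * ip p φ φ := by ring
  linarith [hid, hE2]

lemma bform_expand (φ ψ : Ω → ℝ) (t : ℝ) :
    ip p (fun x => φ x + t * ψ x) (pop P (fun x => φ x + t * ψ x))
      = ip p φ (pop P φ) + t * (ip p φ (pop P ψ) + ip p ψ (pop P φ))
        + t^2 * ip p ψ (pop P ψ) := by
  have pull : ∀ (c : ℝ) (g : Ω → Ω → ℝ), ∑ x, ∑ y, c * g x y = c * ∑ x, ∑ y, g x y := by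
    intro c g
    rw [Finset.mul_sum]
    exact Finset.sum_congr rfl fun x _ => by rw [Finset.mul_sum]
  have hterm : ∀ x y : Ω, (p x * P x y) * ((φ x + t * ψ x) * (φ y + t * ψ y))
      = (p x * P x y) * (φ x * φ y)
        + (t * ((p x * P x y) * (φ x * ψ y)) + (t * ((p x * P x y) * (ψ x * φ y))
        + t^2 * ((p x * P x y) * (ψ x * ψ y)))) := by
    intro x y; ring
  simp only [ip_pop_expand]
  simp only [hterm, Finset.sum_add_distrib]
  rw [pull t, pull t, pull (t^2)]
  ring

lemma bform_cs (hrev : ∀ x y, p x * P x y = p y * P y x)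
    (hpsd : ∀ φ : Ω → ℝ, 0 ≤ ip p φ (pop P φ)) (φ ψ : Ω → ℝ) :
    (ip p φ (pop P ψ))^2 ≤ ip p φ (pop P φ) * ip p ψ (pop P ψ) := by
  have key : ∀ t : ℝ, 0 ≤ ip p ψ (pop P ψ) * (t * t) + (2 * ip p φ (pop P ψ)) * t
      + ip p φ (pop P φ) := by
    intro t
    have h := hpsd (fun x => φ x + t * ψ x)
    rw [bform_expand] at h
    have hsym := ip_pop_symm P p hrev φ ψ
    rw [← hsym] at h
    nlinarith [h]
  have hd := discrim_le_zero key
  rw [discrim] at hd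
  nlinarith [hd]

lemma contraction_step [DecidableEq Ω] (hp : ∀ x, 0 < p x) (hPnn : ∀ x y, 0 ≤ P x y)
    (hProw : ∀ x, ∑ y, P x y = 1) (hlazy : ∀ x, (1:ℝ)/2 ≤ P x x)
    (hrev : ∀ x y, p x * P x y = p y * P y x)
    (c : ℝ) (hc : 0 ≤ c)
    (hbound : ∀ ψ : Ω → ℝ, (∑ x, p x * ψ x = 0) → ip p ψ (pop P ψ) ≤ c * ip p ψ ψ)
    (φ : Ω → ℝ) (hmz : ∑ x, p x * φ x = 0) :
    ip p (pop P φ) (pop P φ) ≤ c^2 * ip p φ φ := by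
  set X := pop P φ with hX
  have hXmz : ∑ x, p x * X x = 0 := pop_mean_zero P p hrev hProw φ hmz
  have hs : ip p X X = ip p X (pop P φ) := rfl
  have hcs := bform_cs P p hrev
    (fun χ => psd P p hp hPnn hProw hlazy hrev χ) X φ
  have h1 : ip p X (pop P X) ≤ c * ip p X X := hbound X hXmz
  have h2 : ip p φ (pop P φ) ≤ c * ip p φ φ := hbound φ hmz
  have h3 : 0 ≤ ip p X (pop P X) := psd P p hp hPnn hProw hlazy hrev X
  have h4 : 0 ≤ ip p φ (pop P φ) := psd P p hp hPnn hProw hlazy hrev φ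
  have h5 : 0 ≤ ip p X X := ip_self_nonneg p X hp
  have h6 : 0 ≤ ip p φ φ := ip_self_nonneg p φ hp
  have key : (ip p X X)^2 ≤ c^2 * ip p X X * ip p φ φ := by
    calc (ip p X X)^2 = (ip p X (pop P φ))^2 := by rw [← hs]
      _ ≤ ip p X (pop P X) * ip p φ (pop P φ) := hcs
      _ ≤ (c * ip p X X) * (c * ip p φ φ) := by
          apply mul_le_mul h1 h2 h4 (by positivity)
      _ = c^2 * ip p X X * ip p φ φ := by ring
  rcases eq_or_lt_of_le h5 with h | h
  · rw [← h]; positivity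
  · nlinarith [key, h]

lemma iterate_mean_zero (hrev : ∀ x y, p x * P x y = p y * P y x)
    (hProw : ∀ x, ∑ y, P x y = 1) (φ : Ω → ℝ) (hmz : ∑ x, p x * φ x = 0) (t : ℕ) :
    ∑ x, p x * (pop P)^[t] φ x = 0 := by
  induction t with
  | zero => simpa using hmz
  | succ t ih =>
      rw [Function.iterate_succ_apply']
      exact pop_mean_zero P p hrev hProw _ ih

lemma contraction_iter [DecidableEq Ω] (hp : ∀ x, 0 < p x) (hPnn : ∀ x y, 0 ≤ P x y)
    (hProw : ∀ x, ∑ y, P x y = 1) (hlazy : ∀ x, (1:ℝ)/2 ≤ P x x)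
    (hrev : ∀ x y, p x * P x y = p y * P y x)
    (c : ℝ) (hc : 0 ≤ c)
    (hbound : ∀ ψ : Ω → ℝ, (∑ x, p x * ψ x = 0) → ip p ψ (pop P ψ) ≤ c * ip p ψ ψ)
    (φ : Ω → ℝ) (hmz : ∑ x, p x * φ x = 0) (t : ℕ) :
    ip p ((pop P)^[t] φ) ((pop P)^[t] φ) ≤ (c^2)^t * ip p φ φ := by
  induction t with
  | zero => simp
  | succ t ih =>
      rw [Function.iterate_succ_apply']
      calc ip p (pop P ((pop P)^[t] φ)) (pop P ((pop P)^[t] φ))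
          ≤ c^2 * ip p ((pop P)^[t] φ) ((pop P)^[t] φ) :=
            contraction_step P p hp hPnn hProw hlazy hrev c hc hbound _
              (iterate_mean_zero P p hrev hProw φ hmz t)
        _ ≤ c^2 * ((c^2)^t * ip p φ φ) := by
            apply mul_le_mul_of_nonneg_left ih (by positivity)
        _ = (c^2)^(t+1) * ip p φ φ := by ring

lemma popIter [DecidableEq Ω] (t : ℕ) (φ : Ω → ℝ) (x : Ω) :
    (pop P)^[t] φ x = ∑ y, ((Matrix.of P)^t) x y * φ y := by
  induction t generalizing x with
  | zero =>
      simp [Matrix.one_apply]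
  | succ t ih =>
      rw [Function.iterate_succ_apply', pop]
      calc ∑ z, P x z * (pop P)^[t] φ z
          = ∑ z, ∑ y, P x z * (((Matrix.of P)^t) z y * φ y) := by
            refine Finset.sum_congr rfl fun z _ => ?_
            rw [ih z, Finset.mul_sum]
        _ = ∑ y, (∑ z, P x z * ((Matrix.of P)^t) z y) * φ y := by
            rw [Finset.sum_comm]
            refine Finset.sum_congr rfl fun y _ => ?_
            rw [Finset.sum_mul]
            exact Finset.sum_congr rfl fun z _ => by ring
        _ = ∑ y, ((Matrix.of P)^(t+1)) x y * φ y := by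
            refine Finset.sum_congr rfl fun y _ => ?_
            congr 1
            rw [pow_succ', Matrix.mul_apply]
            rfl

lemma powrow [DecidableEq Ω] (hProw : ∀ x, ∑ y, P x y = 1) (t : ℕ) (x : Ω) :
    ∑ y, ((Matrix.of P)^t) x y = 1 := by
  have h1 : (pop P)^[t] (fun _ => (1:ℝ)) x = ∑ y, ((Matrix.of P)^t) x y * 1 :=
    popIter P t _ x
  have h2 : ∀ s : ℕ, (pop P)^[s] (fun _ => (1:ℝ)) = fun _ => (1:ℝ) := by
    intro s
    induction s with
    | zero => rfl
    | succ s ih =>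
        rw [Function.iterate_succ_apply', ih]
        funext z
        simp [pop, hProw z]
  rw [h2 t] at h1
  simpa using h1.symm

lemma powrev [DecidableEq Ω] (hrev : ∀ x y, p x * P x y = p y * P y x) (t : ℕ) :
    ∀ x y, p x * ((Matrix.of P)^t) x y = p y * ((Matrix.of P)^t) y x := by
  induction t with
  | zero =>
      intro x y
      by_cases h : x = y
      · rw [h]
      · have h2 : ¬ y = x := fun h' => h h'.symm
        simp [Matrix.one_apply, h, h2]
  | succ t ih =>
      intro x y
      calc p x * ((Matrix.of P)^(t+1)) x y
          = ∑ z, (p x * P x z) * ((Matrix.of P)^t) z y := by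
            rw [pow_succ', Matrix.mul_apply, Finset.mul_sum]
            exact Finset.sum_congr rfl fun z _ => by rw [Matrix.of_apply]; ring
        _ = ∑ z, P z x * (p y * ((Matrix.of P)^t) y z) := by
            refine Finset.sum_congr rfl fun z _ => ?_
            rw [hrev x z, ← ih z y]
            ring
        _ = p y * ((Matrix.of P)^(t+1)) y x := by
            rw [pow_succ, Matrix.mul_apply, Finset.mul_sum]
            refine Finset.sum_congr rfl fun z _ => ?_
            rw [Matrix.of_apply]
            ring

lemma poincare [DecidableEq Ω]
    (hp : ∀ x, 0 < p x) (hPnn : ∀ x y, 0 ≤ P x y)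
    (f : List Ω → ℝ) (hfin : (Function.support f).Finite)
    (hfnn : ∀ γ, 0 ≤ f γ)
    (hval : ∀ γ, f γ ≠ 0 → γ.Chain' (fun a b => 0 < P a b))
    (hflow : ∀ I F : Ω, I ≠ F →
      ∑ γ ∈ hfin.toFinset.filter
          (fun γ => γ.head? = some I ∧ γ.getLast? = some F), f γ = p I * p F)
    (R : ℝ) (hRnn : 0 ≤ R)
    (hcong : ∀ Z Z', 0 < P Z Z' →
      (1 / (p Z * P Z Z')) *
        ∑ γ ∈ hfin.toFinset.filter (fun γ => (Z, Z') ∈ γ.zip γ.tail),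
          f γ * ((γ.length - 1 : ℕ) : ℝ) ≤ R)
    (φ : Ω → ℝ) :
    ∑ x, ∑ y, p x * p y * (φ x - φ y)^2 ≤ R * ∑ x, ∑ y, p x * P x y * (φ x - φ y)^2 := by
  classical
  set S := hfin.toFinset with hS
  set Epos : Finset (Ω × Ω) := Finset.univ.filter (fun e => 0 < P e.1 e.2) with hEpos
  set T : Finset (Ω × Ω) := Finset.univ.filter (fun e : Ω × Ω => e.1 ≠ e.2) with hT
  set SIF : Ω × Ω → Finset (List Ω) := fun e =>
    S.filter (fun γ => γ.head? = some e.1 ∧ γ.getLast? = some e.2) with hSIF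
  -- the per-path weight
  set g : List Ω → ℝ := fun γ =>
    ∑ e ∈ Epos, (if e ∈ edges γ then f γ * ((γ.length - 1 : ℕ) : ℝ) * (φ e.1 - φ e.2)^2 else 0)
    with hg
  have hgnn : ∀ γ, 0 ≤ g γ := by
    intro γ
    refine Finset.sum_nonneg fun e _ => ?_
    by_cases h : e ∈ edges γ
    · simp only [h, if_true]
      exact mul_nonneg (mul_nonneg (hfnn γ) (Nat.cast_nonneg _)) (sq_nonneg _)
    · simp [h]
  -- Step A : LHS as sum over offdiagonal pairs
  have stepA : ∑ x, ∑ y, p x * p y * (φ x - φ y)^2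
      = ∑ e ∈ T, p e.1 * p e.2 * (φ e.1 - φ e.2)^2 := by
    rw [← Fintype.sum_prod_type']
    rw [hT]
    rw [Finset.sum_filter]
    refine Finset.sum_congr rfl fun e _ => ?_
    by_cases h : e.1 = e.2
    · simp [h]
    · simp [h]
  -- Step B+C : bound each offdiagonal term
  have stepBC : ∀ e ∈ T, p e.1 * p e.2 * (φ e.1 - φ e.2)^2 ≤ ∑ γ ∈ SIF e, g γ := by
    rintro ⟨I, F⟩ hIF
    simp only [hT, Finset.mem_filter] at hIF
    have hne : I ≠ F := hIF.2
    have hflow' := hflow I F hne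
    calc p I * p F * (φ I - φ F)^2
        = (∑ γ ∈ SIF (I, F), f γ) * (φ I - φ F)^2 := by rw [← hflow']
      _ = ∑ γ ∈ SIF (I, F), f γ * (φ I - φ F)^2 := by rw [Finset.sum_mul]
      _ ≤ ∑ γ ∈ SIF (I, F), g γ := ?_
    refine Finset.sum_le_sum fun γ hγ => ?_
    simp only [hSIF, Finset.mem_filter, hS, Set.Finite.mem_toFinset,
      Function.mem_support] at hγ
    obtain ⟨hγne, hhead, hlast⟩ := hγ
    -- loop erased path
    set δ := loopErase γ with hδ
    have hδhead : δ.head? = some I := by rw [hδ, loopErase_head?]; exact hhead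
    have hδlast : δ.getLast? = some F := by rw [hδ, loopErase_getLast?]; exact hlast
    have htel : ((edges δ).map (fun e => φ e.1 - φ e.2)).sum = φ I - φ F :=
      telescope φ δ I F hδhead hδlast
    have hCS : (φ I - φ F)^2 ≤ ((edges δ).length : ℝ)
        * ((edges δ).map (fun e => (φ e.1 - φ e.2)^2)).sum := by
      rw [← htel]
      have := list_sq_sum_le ((edges δ).map (fun e => φ e.1 - φ e.2))
      simpa [List.map_map, Function.comp_def] using this
    have hlen : ((edges δ).length : ℝ) ≤ ((γ.length - 1 : ℕ) : ℝ) := by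
      have h1 : (edges δ).length = δ.length - 1 := edges_length δ
      have h2 : δ.length ≤ γ.length := loopErase_length γ
      exact_mod_cast by rw [h1]; omega
    have hnodup : (edges δ).Nodup := nodup_edges (loopErase_nodup γ)
    have hsum_fin : ((edges δ).map (fun e => (φ e.1 - φ e.2)^2)).sum
        = ∑ e ∈ (edges δ).toFinset, (φ e.1 - φ e.2)^2 :=
      (List.sum_toFinset _ hnodup).symm
    have hsubset : (edges δ).toFinset ⊆ Epos.filter (fun e => e ∈ edges γ) := by
      intro e he
      rw [List.mem_toFinset] at he
      have hmemγ : e ∈ edges γ := loopErase_edges_subset γ he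
      have hpos : 0 < P e.1 e.2 := edges_of_chain' (hval γ hγne) e hmemγ
      simp only [hEpos, Finset.mem_filter, Finset.mem_filter, Finset.mem_univ, true_and]
      exact ⟨hpos, hmemγ⟩
    have hedge_bound : ((edges δ).map (fun e => (φ e.1 - φ e.2)^2)).sum
        ≤ ∑ e ∈ Epos, (if e ∈ edges γ then (φ e.1 - φ e.2)^2 else 0) := by
      rw [hsum_fin, ← Finset.sum_filter]
      exact Finset.sum_le_sum_of_subset_of_nonneg hsubset (fun e _ _ => sq_nonneg _)
    have hfγ : 0 ≤ f γ := hfnn γ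
    have hLγ : (0:ℝ) ≤ ((γ.length - 1 : ℕ) : ℝ) := Nat.cast_nonneg _
    have hsq_sum_nn : 0 ≤ ((edges δ).map (fun e => (φ e.1 - φ e.2)^2)).sum := by
      rw [hsum_fin]
      exact Finset.sum_nonneg fun e _ => sq_nonneg _
    calc f γ * (φ I - φ F)^2
        ≤ f γ * (((γ.length - 1 : ℕ) : ℝ)
            * ∑ e ∈ Epos, (if e ∈ edges γ then (φ e.1 - φ e.2)^2 else 0)) := by
          refine mul_le_mul_of_nonneg_left ?_ hfγ
          calc (φ I - φ F)^2
              ≤ ((edges δ).length : ℝ) * ((edges δ).map (fun e => (φ e.1 - φ e.2)^2)).sum :=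
                hCS
            _ ≤ ((γ.length - 1 : ℕ) : ℝ)
                * ((edges δ).map (fun e => (φ e.1 - φ e.2)^2)).sum :=
                mul_le_mul_of_nonneg_right hlen hsq_sum_nn
            _ ≤ ((γ.length - 1 : ℕ) : ℝ)
                * ∑ e ∈ Epos, (if e ∈ edges γ then (φ e.1 - φ e.2)^2 else 0) :=
                mul_le_mul_of_nonneg_left hedge_bound hLγ
      _ = g γ := by
          rw [hg]
          rw [Finset.mul_sum, Finset.mul_sum]
          refine Finset.sum_congr rfl fun e _ => ?_
          by_cases h : e ∈ edges γ
          · simp only [h, if_true]; ring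
          · simp [h]
  -- Step D : sum over distinct endpoints, then over all support paths
  have stepD : ∑ e ∈ T, (∑ γ ∈ SIF e, g γ) ≤ ∑ γ ∈ S, g γ := by
    have hdisj : (T : Set (Ω × Ω)).PairwiseDisjoint SIF := by
      intro e₁ h₁ e₂ h₂ hne
      refine Finset.disjoint_left.2 fun γ hγ₁ hγ₂ => ?_
      simp only [hSIF, Finset.mem_filter] at hγ₁ hγ₂
      apply hne
      have h1 := hγ₁.2.1.symm.trans hγ₂.2.1
      have h2 := hγ₁.2.2.symm.trans hγ₂.2.2
      exact Prod.ext (Option.some.inj h1) (Option.some.inj h2)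
    rw [← Finset.sum_biUnion hdisj]
    refine Finset.sum_le_sum_of_subset_of_nonneg ?_ (fun γ _ _ => hgnn γ)
    intro γ hγ
    rw [Finset.mem_biUnion] at hγ
    obtain ⟨e, _, hγe⟩ := hγ
    exact (Finset.mem_filter.1 hγe).1
  -- Step E : swap sums and apply congestion
  have stepE : ∑ γ ∈ S, g γ ≤ R * ∑ x, ∑ y, p x * P x y * (φ x - φ y)^2 := by
    rw [hg, Finset.sum_comm]
    have hedge : ∀ e ∈ Epos,
        ∑ γ ∈ S, (if e ∈ edges γ then f γ * ((γ.length - 1 : ℕ) : ℝ) * (φ e.1 - φ e.2)^2 else 0)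
        ≤ (φ e.1 - φ e.2)^2 * (R * (p e.1 * P e.1 e.2)) := by
      rintro ⟨Z, Z'⟩ he
      simp only [hEpos, Finset.mem_filter] at he
      have hPpos : 0 < P Z Z' := he.2
      have hppos : 0 < p Z * P Z Z' := mul_pos (hp Z) hPpos
      have hc := hcong Z Z' hPpos
      rw [div_mul_eq_mul_div, one_mul, div_le_iff₀ hppos] at hc
      calc ∑ γ ∈ S, (if (Z, Z') ∈ edges γ
              then f γ * ((γ.length - 1 : ℕ) : ℝ) * (φ Z - φ Z')^2 else 0)
          = (φ Z - φ Z')^2 * ∑ γ ∈ S.filter (fun γ => (Z, Z') ∈ γ.zip γ.tail),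
              f γ * ((γ.length - 1 : ℕ) : ℝ) := by
            rw [Finset.mul_sum, ← Finset.sum_filter]
            refine Finset.sum_congr rfl fun γ _ => by ring
        _ ≤ (φ Z - φ Z')^2 * (R * (p Z * P Z Z')) :=
            mul_le_mul_of_nonneg_left hc (sq_nonneg _)
    calc ∑ e ∈ Epos, ∑ γ ∈ S,
          (if e ∈ edges γ then f γ * ((γ.length - 1 : ℕ) : ℝ) * (φ e.1 - φ e.2)^2 else 0)
        ≤ ∑ e ∈ Epos, (φ e.1 - φ e.2)^2 * (R * (p e.1 * P e.1 e.2)) :=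
          Finset.sum_le_sum hedge
      _ ≤ ∑ e : Ω × Ω, (φ e.1 - φ e.2)^2 * (R * (p e.1 * P e.1 e.2)) := by
          refine Finset.sum_le_sum_of_subset_of_nonneg (Finset.filter_subset _ _) ?_
          intro e _ _
          have h1 : 0 ≤ P e.1 e.2 := hPnn e.1 e.2
          have h2 : 0 ≤ p e.1 := (hp e.1).le
          positivity
      _ = R * ∑ x, ∑ y, p x * P x y * (φ x - φ y)^2 := by
          simp only [Finset.mul_sum]
          rw [← Fintype.sum_prod_type']
          exact Finset.sum_congr rfl fun e _ => by ring
  calc ∑ x, ∑ y, p x * p y * (φ x - φ y)^2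
      = ∑ e ∈ T, p e.1 * p e.2 * (φ e.1 - φ e.2)^2 := stepA
    _ ≤ ∑ e ∈ T, (∑ γ ∈ SIF e, g γ) := Finset.sum_le_sum stepBC
    _ ≤ ∑ γ ∈ S, g γ := stepD
    _ ≤ R * ∑ x, ∑ y, p x * P x y * (φ x - φ y)^2 := stepE

lemma var_identity (hpsum : ∑ x, p x = 1) (φ : Ω → ℝ) (hmz : ∑ x, p x * φ x = 0) :
    ∑ x, ∑ y, p x * p y * (φ x - φ y)^2 = 2 * ip p φ φ := by
  have hterm : ∀ x y : Ω, p x * p y * (φ x - φ y)^2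
      = (p x * (φ x * φ x)) * p y + p x * (p y * (φ y * φ y))
        - 2 * ((p x * φ x) * (p y * φ y)) := by
    intro x y; ring
  have hA : ∀ x : Ω, ∑ y, (p x * (φ x * φ x)) * p y = p x * (φ x * φ x) := by
    intro x; rw [← Finset.mul_sum, hpsum, mul_one]
  have hB : ∀ x : Ω, ∑ y, p x * (p y * (φ y * φ y)) = p x * ip p φ φ := by
    intro x; rw [← Finset.mul_sum]; rfl
  have hC : ∀ x : Ω, ∑ y, 2 * ((p x * φ x) * (p y * φ y)) = 2 * ((p x * φ x) * 0) := by
    intro x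
    rw [← Finset.mul_sum, ← Finset.mul_sum, hmz]
  calc ∑ x, ∑ y, p x * p y * (φ x - φ y)^2
      = ∑ x, (p x * (φ x * φ x) + p x * ip p φ φ - 2 * ((p x * φ x) * 0)) := by
        refine Finset.sum_congr rfl fun x _ => ?_
        rw [Finset.sum_congr rfl fun y _ => hterm x y, Finset.sum_sub_distrib,
          Finset.sum_add_distrib, hA x, hB x, hC x]
    _ = ∑ x, (p x * (φ x * φ x) + p x * ip p φ φ) := by
        refine Finset.sum_congr rfl fun x _ => by ring
    _ = ip p φ φ + (∑ x, p x) * ip p φ φ := by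
        rw [Finset.sum_add_distrib, Finset.sum_mul]
        rfl
    _ = 2 * ip p φ φ := by rw [hpsum]; ring

end Analysis

end Stmt17Aux


set_option maxHeartbeats 1000000 in
open Stmt17Aux in
/-- Sinclair's multicommodity-flow bound on the mixing time: for a lazy,
ergodic, reversible chain P with stationary distribution p, and a flow f with
congestion at most R, the mixing time is at most ln(2e / min_S p(S)) · R. -/
theorem stmt17 {Ω : Type*} [Fintype Ω] [DecidableEq Ω] [Nonempty Ω]
    (P : Ω → Ω → ℝ) (p : Ω → ℝ)
    (hppos : ∀ x, 0 < p x) (hpsum : ∑ x, p x = 1)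
    (hPnn : ∀ x y, 0 ≤ P x y) (hProw : ∀ x, ∑ y, P x y = 1)
    (hlazy : ∀ x, (1 : ℝ) / 2 ≤ P x x)
    (herg : ∀ x y, ∃ t : ℕ, 0 < ((Matrix.of P) ^ t) x y)
    (hrev : ∀ x y, p x * P x y = p y * P y x)
    (f : List Ω → ℝ) (hfin : (Function.support f).Finite)
    (hfnn : ∀ γ, 0 ≤ f γ)
    (hval : ∀ γ, f γ ≠ 0 → γ.Chain' (fun a b => 0 < P a b))
    (hflow : ∀ I F : Ω, I ≠ F →
      ∑ γ ∈ hfin.toFinset.filter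
          (fun γ => γ.head? = some I ∧ γ.getLast? = some F), f γ = p I * p F)
    (R : ℝ)
    (hcong : ∀ Z Z', 0 < P Z Z' →
      (1 / (p Z * P Z Z')) *
        ∑ γ ∈ hfin.toFinset.filter (fun γ => (Z, Z') ∈ γ.zip γ.tail),
          f γ * ((γ.length - 1 : ℕ) : ℝ) ≤ R) :
    ((sInf {t : ℕ | ∀ x, ∑ y, |((Matrix.of P) ^ t) x y - p y| ≤ Real.exp (-1)} : ℕ) : ℝ)
      ≤ Real.log (2 * Real.exp 1 / Finset.univ.inf' Finset.univ_nonempty p) * R := by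
  classical
  set pmin := Finset.univ.inf' Finset.univ_nonempty p with hpmin
  obtain ⟨xm, _, hxm⟩ := Finset.exists_mem_eq_inf' Finset.univ_nonempty p
  have hpminpos : 0 < pmin := by rw [hpmin, hxm]; exact hppos xm
  have hpmin_le : ∀ x, pmin ≤ p x := fun x => Finset.inf'_le p (Finset.mem_univ x)
  have hp_le_one : ∀ x, p x ≤ 1 := by
    intro x
    rw [← hpsum]
    exact Finset.single_le_sum (fun y _ => (hppos y).le) (Finset.mem_univ x)
  have hRnn : 0 ≤ R := by
    obtain ⟨x⟩ := ‹Nonempty Ω›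
    have hPxx : 0 < P x x := lt_of_lt_of_le (by norm_num) (hlazy x)
    refine le_trans ?_ (hcong x x hPxx)
    apply mul_nonneg
    · exact one_div_nonneg.2 (mul_nonneg (hppos x).le (hPnn x x))
    · exact Finset.sum_nonneg fun γ _ => mul_nonneg (hfnn γ) (Nat.cast_nonneg _)
  have hlogpos : 0 < Real.log (2 * Real.exp 1 / pmin) := by
    apply Real.log_pos
    rw [lt_div_iff₀ hpminpos]
    have h1 : pmin ≤ 1 := le_trans (hpmin_le xm) (hp_le_one xm)
    nlinarith [Real.exp_one_gt_d9]
  by_cases hcard : Fintype.card Ω ≤ 1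
  · -- trivial one-state case
    have hall : ∀ x y : Ω, x = y := fun x y => Fintype.card_le_one_iff.1 hcard x y
    obtain ⟨x0⟩ := ‹Nonempty Ω›
    have huniv : (Finset.univ : Finset Ω) = {x0} :=
      Finset.eq_singleton_iff_unique_mem.2 ⟨Finset.mem_univ _, fun y _ => hall y x0⟩
    have hpx0 : p x0 = 1 := by
      rw [← hpsum, huniv, Finset.sum_singleton]
    have h0 : (0:ℕ) ∈ {t : ℕ | ∀ x, ∑ y, |((Matrix.of P) ^ t) x y - p y| ≤ Real.exp (-1)} := by
      intro x
      have hx : x = x0 := hall x x0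
      rw [pow_zero, huniv, Finset.sum_singleton, hx, Matrix.one_apply_eq, hpx0]
      simp [Real.exp_nonneg]
    have hinf0 : sInf {t : ℕ | ∀ x, ∑ y, |((Matrix.of P) ^ t) x y - p y| ≤ Real.exp (-1)} = 0 :=
      Nat.le_zero.1 (Nat.sInf_le h0)
    rw [hinf0, Nat.cast_zero]
    exact mul_nonneg hlogpos.le hRnn
  · push_neg at hcard
    obtain ⟨x0, y0, hxy⟩ := Fintype.exists_pair_of_one_lt_card hcard
    -- pmin ≤ 1/2
    have hsumpair : p x0 + p y0 ≤ 1 := by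
      rw [← hpsum, ← Finset.sum_pair hxy]
      exact Finset.sum_le_sum_of_subset_of_nonneg (Finset.subset_univ _)
        (fun z _ _ => (hppos z).le)
    have hpmin_half : pmin ≤ 1/2 := by
      have h1 := hpmin_le x0
      have h2 := hpmin_le y0
      linarith
    -- R ≥ 1
    have hR1 : 1 ≤ R := by
      set φ0 : Ω → ℝ := fun z => (if z = x0 then (1:ℝ) else 0) - p x0 with hφ0
      have hmz0 : ∑ z, p z * φ0 z = 0 := by
        have hterm : ∀ z, p z * φ0 z = (if z = x0 then p z else 0) - p z * p x0 := by
          intro z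
          by_cases h : z = x0 <;> simp [hφ0, h] <;> ring
        rw [Finset.sum_congr rfl fun z _ => hterm z, Finset.sum_sub_distrib,
          Finset.sum_ite_eq' Finset.univ x0 p]
        simp only [Finset.mem_univ, if_true]
        rw [← Finset.sum_mul, hpsum, one_mul]
        ring
      have hφ0x0 : φ0 x0 = 1 - p x0 := by simp [hφ0]
      have hpx0lt : p x0 < 1 := by
        have := hppos y0
        linarith
      have hip0pos : 0 < ip p φ0 φ0 := by
        have hterm : 0 < p x0 * (φ0 x0 * φ0 x0) := by
          rw [hφ0x0]
          have h1 : 0 < 1 - p x0 := by linarith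
          exact mul_pos (hppos x0) (mul_pos h1 h1)
        refine lt_of_lt_of_le hterm ?_
        exact Finset.single_le_sum
          (fun z _ => mul_nonneg (hppos z).le (mul_self_nonneg _)) (Finset.mem_univ x0)
      have hpo := poincare P p hppos hPnn f hfin hfnn hval hflow R hRnn hcong φ0
      rw [var_identity p hpsum φ0 hmz0] at hpo
      have hdir := dirichlet_identity P p hrev hProw φ0
      have hpsd := psd P p hppos hPnn hProw hlazy hrev φ0
      nlinarith [hpo, hdir, hpsd, hip0pos]
    have hRpos : 0 < R := lt_of_lt_of_le one_pos hR1
    set c : ℝ := 1 - 1/R with hc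
    have hc0 : 0 ≤ c := by
      rw [hc]
      have : 1/R ≤ 1 := by
        rw [div_le_one hRpos]; exact hR1
      linarith
    have hcexp : c ≤ Real.exp (-(1/R)) := by
      have := Real.add_one_le_exp (-(1/R))
      rw [hc]; linarith
    have hbound : ∀ ψ : Ω → ℝ, (∑ x, p x * ψ x = 0) → ip p ψ (pop P ψ) ≤ c * ip p ψ ψ := by
      intro ψ hmz
      have hpo := poincare P p hppos hPnn f hfin hfnn hval hflow R hRnn hcong ψ
      rw [var_identity p hpsum ψ hmz] at hpo
      have hdir := dirichlet_identity P p hrev hProw ψ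
      have key : ip p ψ ψ ≤ R * (ip p ψ ψ - ip p ψ (pop P ψ)) := by nlinarith [hpo, hdir]
      rw [hc]
      have hiq : ip p ψ ψ / R ≤ ip p ψ ψ - ip p ψ (pop P ψ) := by
        rw [div_le_iff₀ hRpos]
        nlinarith [key]
      have : ip p ψ (pop P ψ) ≤ ip p ψ ψ - ip p ψ ψ / R := by linarith
      calc ip p ψ (pop P ψ) ≤ ip p ψ ψ - ip p ψ ψ / R := this
        _ = (1 - 1/R) * ip p ψ ψ := by ring
    set L := Real.log (1/pmin) with hLdef
    have hL : L = -Real.log pmin := by rw [hLdef, one_div, Real.log_inv]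
    have hLge : Real.log 2 ≤ L := by
      rw [hLdef]
      apply Real.log_le_log (by norm_num)
      rw [le_div_iff₀ hpminpos]
      linarith
    have hl2 : (0.6931471803 : ℝ) < Real.log 2 := Real.log_two_gt_d9
    have hLpos : 0 < L := lt_of_lt_of_le (lt_trans (by norm_num) hl2) hLge
    set N := ⌈R * (1 + L/2)⌉₊ with hN
    have hNmem : N ∈ {t : ℕ | ∀ x, ∑ y, |((Matrix.of P) ^ t) x y - p y| ≤ Real.exp (-1)} := by
      intro x
      set φx : Ω → ℝ := fun z => (if z = x then 1/p x else 0) - 1 with hφx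
      have hmzx : ∑ z, p z * φx z = 0 := by
        have hterm : ∀ z, p z * φx z = (if z = x then p z * (1/p x) else 0) - p z := by
          intro z
          by_cases h : z = x <;> simp [hφx, h] <;> ring
        rw [Finset.sum_congr rfl fun z _ => hterm z, Finset.sum_sub_distrib,
          Finset.sum_ite_eq' Finset.univ x (fun z => p z * (1/p x))]
        simp only [Finset.mem_univ, if_true]
        rw [hpsum, mul_one_div, div_self (ne_of_gt (hppos x))]
        ring
      have hipx : ip p φx φx ≤ 1/pmin := by
        have hsplit : ip p φx φx
            = p x * ((1/p x - 1) * (1/p x - 1)) + ∑ z ∈ Finset.univ.erase x, p z := by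
          rw [ip, ← Finset.add_sum_erase _ _ (Finset.mem_univ x)]
          congr 1
          · simp [hφx]
          · refine Finset.sum_congr rfl fun z hz => ?_
            have hzx : z ≠ x := (Finset.mem_erase.1 hz).1
            simp [hφx, hzx]
        have herase : ∑ z ∈ Finset.univ.erase x, p z = 1 - p x := by
          rw [Finset.sum_erase_eq_sub (Finset.mem_univ x), hpsum]
        rw [hsplit, herase]
        have hinv : p x * (1/p x) = 1 := by
          rw [mul_one_div, div_self (ne_of_gt (hppos x))]
        have hle : p x * ((1/p x - 1) * (1/p x - 1)) + (1 - p x) ≤ 1/p x := by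
          nlinarith [hinv, hppos x, hp_le_one x]
        have hmono : 1/p x ≤ 1/pmin :=
          one_div_le_one_div_of_le hpminpos (hpmin_le x)
        linarith
      set ψ : Ω → ℝ := (pop P)^[N] φx with hψdef
      have hψval : ∀ y, p y * ψ y = ((Matrix.of P)^N) x y - p y := by
        intro y
        rw [hψdef, popIter]
        have hterm : ∀ z, ((Matrix.of P)^N) y z * φx z
            = (if z = x then ((Matrix.of P)^N) y z * (1/p x) else 0)
              - ((Matrix.of P)^N) y z := by
          intro z
          by_cases h : z = x <;> simp [hφx, h] <;> ring
        rw [Finset.sum_congr rfl fun z _ => hterm z, Finset.sum_sub_distrib,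
          Finset.sum_ite_eq' Finset.univ x (fun z => ((Matrix.of P)^N) y z * (1/p x)),
          powrow P hProw N y]
        simp only [Finset.mem_univ, if_true]
        have hrevN := powrev P p hrev N y x
        have hpx : p x ≠ 0 := ne_of_gt (hppos x)
        calc p y * (((Matrix.of P)^N) y x * (1/p x) - 1)
            = (p y * ((Matrix.of P)^N) y x) * (1/p x) - p y := by ring
          _ = (p x * ((Matrix.of P)^N) x y) * (1/p x) - p y := by rw [hrevN]
          _ = ((Matrix.of P)^N) x y - p y := by
              rw [mul_one_div, mul_comm (p x), mul_div_assoc, div_self hpx, mul_one]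
      -- contraction bound
      have hipψ : ip p ψ ψ ≤ (c^2)^N * (1/pmin) := by
        have h1 := contraction_iter P p hppos hPnn hProw hlazy hrev c hc0 hbound φx hmzx N
        have h2 : (0:ℝ) ≤ (c^2)^N := by positivity
        calc ip p ψ ψ ≤ (c^2)^N * ip p φx φx := h1
          _ ≤ (c^2)^N * (1/pmin) := mul_le_mul_of_nonneg_left hipx h2
      have hcN : c^N ≤ Real.exp (-((N:ℝ)/R)) := by
        calc c^N ≤ (Real.exp (-(1/R)))^N := pow_le_pow_left₀ hc0 hcexp N
          _ = Real.exp (-((N:ℝ)/R)) := by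
              rw [← Real.exp_nat_mul]
              congr 1
              push_cast
              ring
      have hc2N : (c^2)^N ≤ Real.exp (-((N:ℝ)/R))^2 := by
        rw [← pow_mul, mul_comm, pow_mul]
        exact pow_le_pow_left₀ (by positivity) hcN 2
      have hNge : R * (1 + L/2) ≤ (N:ℝ) := Nat.le_ceil _
      have hpminexp : 1/pmin = Real.exp L := by
        rw [hLdef, Real.exp_log (by positivity : (0:ℝ) < 1/pmin)]
      have hexp : Real.exp (-((N:ℝ)/R))^2 * (1/pmin) ≤ (Real.exp (-1 : ℝ))^2 := by
        rw [hpminexp, sq, ← Real.exp_add, ← Real.exp_add, sq, ← Real.exp_add]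
        apply Real.exp_le_exp.2
        have h2NR : (2 + L) * R ≤ 2 * (N:ℝ) := by nlinarith [hNge]
        have h3 : 2 + L ≤ 2 * ((N:ℝ)/R) := by
          rw [mul_div_assoc'] at *
          rw [le_div_iff₀ hRpos]
          linarith [h2NR]
        have h4 : -((N:ℝ)/R) + -((N:ℝ)/R) = -(2 * ((N:ℝ)/R)) := by ring
        rw [h4]
        linarith [h3]
      have hcombo : ip p ψ ψ ≤ (Real.exp (-1 : ℝ))^2 := by
        calc ip p ψ ψ ≤ (c^2)^N * (1/pmin) := hipψ
          _ ≤ Real.exp (-((N:ℝ)/R))^2 * (1/pmin) :=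
              mul_le_mul_of_nonneg_right hc2N (by positivity)
          _ ≤ (Real.exp (-1 : ℝ))^2 := hexp
      have habs : ∀ y, |((Matrix.of P)^N) x y - p y| = p y * |ψ y| := by
        intro y
        rw [← hψval y, abs_mul, abs_of_pos (hppos y)]
      rw [Finset.sum_congr rfl fun y _ => habs y]
      have hcs := Finset.sum_sq_le_sum_mul_sum_of_sq_eq_mul Finset.univ
        (r := fun y => p y * |ψ y|) (f := p) (g := fun y => p y * (ψ y * ψ y))
        (fun y _ => (hppos y).le)
        (fun y _ => mul_nonneg (hppos y).le (mul_self_nonneg _))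
        (fun y _ => by rw [mul_pow, sq_abs]; ring)
      rw [hpsum, one_mul] at hcs
      have hip_eq : ∑ y, p y * (ψ y * ψ y) = ip p ψ ψ := rfl
      rw [hip_eq] at hcs
      have hsnn : 0 ≤ ∑ y, p y * |ψ y| :=
        Finset.sum_nonneg fun y _ => mul_nonneg (hppos y).le (abs_nonneg _)
      nlinarith [hcs, hcombo, hsnn, Real.exp_pos (-1 : ℝ)]
    have hNle : (N : ℝ) ≤ R * (1 + L/2) + 1 := by
      have hnn : 0 ≤ R * (1 + L/2) := by positivity
      exact le_of_lt (Nat.ceil_lt_add_one hnn)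
    have hsInf : ((sInf {t : ℕ | ∀ x, ∑ y, |((Matrix.of P) ^ t) x y - p y|
        ≤ Real.exp (-1)} : ℕ) : ℝ) ≤ (N : ℝ) :=
      Nat.cast_le.2 (Nat.sInf_le hNmem)
    have hlogform : Real.log (2 * Real.exp 1 / pmin) = Real.log 2 + 1 + L := by
      rw [Real.log_div (by positivity) (ne_of_gt hpminpos), Real.log_mul (by norm_num)
        (ne_of_gt (Real.exp_pos 1)), Real.log_exp, hL]
      ring
    rw [hlogform]
    have hfinal : R * (1 + L/2) + 1 ≤ (Real.log 2 + 1 + L) * R := by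
      nlinarith [hl2, hLge, hR1]
    linarith [hsInf, hNle, hfinal]
end

section
/- Let W ⊆ V be subspaces of F2^m with dim(V) - dim(W) = Δ, and let w: F2^m → ℝ_{≥0} be a product weight w(x) = Π_i r^{x_i} with 0 < r ≤ 1 (i.e., w(A) = r^{|A|} for the subset A with indicator x). Then Σ_{x ∈ V} w(x) ≤ 2^Δ · Σ_{x ∈ W} w(x). -/
open Finset

namespace Stmt18Aux

noncomputable def e (t : ZMod 2) : ℝ := (-1 : ℝ) ^ t.val

lemma zmod2_cases (u : ZMod 2) : u = 0 ∨ u = 1 := by revert u; decide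

lemma e_add (u v : ZMod 2) : e (u + v) = e u * e v := by
  rcases zmod2_cases u with h | h <;> rcases zmod2_cases v with h' | h' <;>
    subst h <;> subst h' <;> simp [e, show ((1:ZMod 2)+1) = 0 from rfl, show ZMod.val (1:ZMod 2) = 1 from rfl]

lemma e_zero : e 0 = 1 := by norm_num [e]

lemma abs_e (t : ZMod 2) : |e t| = 1 := by simp [e, abs_pow]

lemma e_le_one (t : ZMod 2) : e t ≤ 1 := le_of_abs_le (abs_e t).le

lemma sum_e (z : ZMod 2) : ∑ t : ZMod 2, e (t * z) = if z = 0 then 2 else 0 := by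
  have : (Finset.univ : Finset (ZMod 2)) = {0, 1} := by decide
  rcases zmod2_cases z with h | h <;> subst h <;>
    simp [this, e, show ZMod.val (1:ZMod 2) = 1 from rfl]

variable {m : ℕ}

noncomputable def E (χ x : Fin m → ZMod 2) : ℝ := ∏ i, e (χ i * x i)

lemma E_add_right (χ x y : Fin m → ZMod 2) : E χ (x + y) = E χ x * E χ y := by
  unfold E
  rw [← prod_mul_distrib]
  refine prod_congr rfl fun i _ => ?_
  rw [Pi.add_apply, mul_add, e_add]

lemma E_le_one (χ x : Fin m → ZMod 2) : E χ x ≤ 1 := by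
  refine le_of_abs_le (le_of_eq ?_)
  rw [E, Finset.abs_prod]
  simp [abs_e]

lemma E_zero_right (χ : Fin m → ZMod 2) : E χ 0 = 1 := by
  simp [E, e_zero]

lemma sum_E (z : Fin m → ZMod 2) :
    ∑ χ : Fin m → ZMod 2, E χ z = if z = 0 then (2 : ℝ) ^ m else 0 := by
  have h1 : ∑ χ : Fin m → ZMod 2, E χ z = ∏ i, ∑ t : ZMod 2, e (t * z i) := by
    rw [Finset.prod_univ_sum]
    simp [E]
  rw [h1]
  by_cases hz : z = 0
  · subst hz
    simp [sum_e, e_zero]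
  · obtain ⟨i, hi⟩ : ∃ i, z i ≠ 0 := by
      by_contra h
      push_neg at h
      exact hz (funext fun i => h i)
    rw [if_neg hz]
    exact Finset.prod_eq_zero (mem_univ i) (by rw [sum_e, if_neg hi])


noncomputable def w (r : ℝ) (x : Fin m → ZMod 2) : ℝ := ∏ i, r ^ (x i).val

noncomputable def fhat (r : ℝ) (χ : Fin m → ZMod 2) : ℝ :=
  ∑ x : Fin m → ZMod 2, w r x * E χ x

lemma fhat_nonneg {r : ℝ} (hr0 : 0 ≤ r) (hr1 : r ≤ 1) (χ : Fin m → ZMod 2) :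
    0 ≤ fhat r χ := by
  have h1 : fhat r χ = ∏ i, ∑ t : ZMod 2, r ^ t.val * e (χ i * t) := by
    rw [Finset.prod_univ_sum]
    simp only [Fintype.piFinset_univ]
    unfold fhat w E
    rw [Finset.sum_congr rfl fun x _ => (Finset.prod_mul_distrib).symm]
  rw [h1]
  refine Finset.prod_nonneg fun i _ => ?_
  have h2 : ∑ t : ZMod 2, r ^ t.val * e (χ i * t) = 1 + r * e (χ i) := by
    have : (Finset.univ : Finset (ZMod 2)) = {0, 1} := by decide
    rw [this]
    simp [e_zero, show ZMod.val (0:ZMod 2) = 0 from rfl,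
      show ZMod.val (1:ZMod 2) = 1 from rfl]
  rw [h2]
  rcases zmod2_cases (χ i) with h | h <;> rw [h]
  · rw [e_zero]; linarith
  · have : e 1 = -1 := by
      simp [e, show ZMod.val (1:ZMod 2) = 1 from rfl]
    rw [this]; linarith

lemma inversion {r : ℝ} (y : Fin m → ZMod 2) :
    w r y = (1 / 2 ^ m) * ∑ χ : Fin m → ZMod 2, fhat r χ * E χ y := by
  have key : ∑ χ : Fin m → ZMod 2, fhat r χ * E χ y = 2 ^ m * w r y := by
    unfold fhat
    rw [Finset.sum_congr rfl fun χ _ => Finset.sum_mul _ _ _, Finset.sum_comm]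
    calc ∑ x : Fin m → ZMod 2, ∑ χ : Fin m → ZMod 2, w r x * E χ x * E χ y
          = ∑ x : Fin m → ZMod 2, w r x * ∑ χ : Fin m → ZMod 2, E χ (x + y) := by
            refine Finset.sum_congr rfl fun x _ => ?_
            rw [Finset.mul_sum]
            exact Finset.sum_congr rfl fun χ _ => by rw [E_add_right, mul_assoc]
        _ = ∑ x : Fin m → ZMod 2, w r x * (if x + y = 0 then (2:ℝ) ^ m else 0) := by
            exact Finset.sum_congr rfl fun x _ => by rw [sum_E]
        _ = 2 ^ m * w r y := by
            rw [Finset.sum_eq_single y]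
            · have : y + y = 0 := by
                ext i; exact CharTwo.add_self_eq_zero _
              rw [if_pos this, mul_comm]
            · intro x _ hxy
              have : x + y ≠ 0 := by
                intro h
                apply hxy
                have := congrArg (· + y) h
                simpa [add_assoc, show y + y = (0 : Fin m → ZMod 2) from
                  funext fun i => CharTwo.add_self_eq_zero _] using this
              rw [if_neg this, mul_zero]
            · simp
  rw [key]
  field_simp


lemma add_self_fun (x : Fin m → ZMod 2) : x + x = 0 :=
  funext fun _ => CharTwo.add_self_eq_zero _

variable (W : Submodule (ZMod 2) (Fin m → ZMod 2)) [DecidablePred (· ∈ W)]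

noncomputable def Wsum (χ : Fin m → ZMod 2) : ℝ :=
  ∑ x ∈ Finset.univ.filter (· ∈ W), E χ x

lemma reindex (χ x : Fin m → ZMod 2) (hx : x ∈ W) :
    ∑ y ∈ Finset.univ.filter (· ∈ W), E χ (x + y) = Wsum W χ := by
  unfold Wsum
  refine Finset.sum_nbij' (fun y => x + y) (fun y => x + y) ?_ ?_ ?_ ?_ ?_
  · intro y hy
    simp only [mem_filter, mem_univ, true_and] at hy ⊢
    exact W.add_mem hx hy
  · intro y hy
    simp only [mem_filter, mem_univ, true_and] at hy ⊢
    exact W.add_mem hx hy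
  · intro y _; show x + (x + y) = y; rw [← add_assoc, add_self_fun, zero_add]
  · intro y _; show x + (x + y) = y; rw [← add_assoc, add_self_fun, zero_add]
  · intro y _; rfl

lemma Wsum_nonneg (χ : Fin m → ZMod 2) : 0 ≤ Wsum W χ := by
  have hsq : Wsum W χ ^ 2 =
      ((Finset.univ.filter (· ∈ W)).card : ℝ) * Wsum W χ := by
    calc Wsum W χ ^ 2 = ∑ x ∈ Finset.univ.filter (· ∈ W),
          ∑ y ∈ Finset.univ.filter (· ∈ W), E χ x * E χ y := by
          rw [sq, Wsum, Finset.sum_mul_sum]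
      _ = ∑ x ∈ Finset.univ.filter (· ∈ W),
          ∑ y ∈ Finset.univ.filter (· ∈ W), E χ (x + y) := by
          exact Finset.sum_congr rfl fun x _ => Finset.sum_congr rfl fun y _ =>
            (E_add_right χ x y).symm
      _ = ∑ x ∈ Finset.univ.filter (· ∈ W), Wsum W χ := by
          refine Finset.sum_congr rfl fun x hx => ?_
          simp only [mem_filter, mem_univ, true_and] at hx
          exact reindex W χ x hx
      _ = ((Finset.univ.filter (· ∈ W)).card : ℝ) * Wsum W χ := by
          rw [Finset.sum_const, nsmul_eq_mul]
  nlinarith [sq_nonneg (Wsum W χ), (Nat.cast_nonneg (α := ℝ) (Finset.univ.filter (· ∈ W)).card)]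

lemma sum_coset_eq (r : ℝ) (a : Fin m → ZMod 2) :
    ∑ x ∈ Finset.univ.filter (· ∈ W), w r (x + a)
      = (1 / 2 ^ m) * ∑ χ : Fin m → ZMod 2, fhat r χ * (E χ a * Wsum W χ) := by
  calc ∑ x ∈ Finset.univ.filter (· ∈ W), w r (x + a)
      = ∑ x ∈ Finset.univ.filter (· ∈ W),
          (1 / 2 ^ m) * ∑ χ : Fin m → ZMod 2, fhat r χ * E χ (x + a) :=
        Finset.sum_congr rfl fun x _ => inversion (x + a)
    _ = (1 / 2 ^ m) * ∑ x ∈ Finset.univ.filter (· ∈ W),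
          ∑ χ : Fin m → ZMod 2, fhat r χ * E χ (x + a) := by rw [Finset.mul_sum]
    _ = (1 / 2 ^ m) * ∑ χ : Fin m → ZMod 2,
          ∑ x ∈ Finset.univ.filter (· ∈ W), fhat r χ * E χ (x + a) := by
          rw [Finset.sum_comm]
    _ = (1 / 2 ^ m) * ∑ χ : Fin m → ZMod 2, fhat r χ * (E χ a * Wsum W χ) := by
          congr 1
          refine Finset.sum_congr rfl fun χ _ => ?_
          rw [← Finset.mul_sum]
          congr 1
          rw [Wsum, Finset.mul_sum, ← Finset.sum_congr rfl
            fun x _ => (rfl : E χ a * E χ x = E χ a * E χ x)]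
          refine Finset.sum_congr rfl fun x _ => ?_
          rw [E_add_right, mul_comm]

lemma coset_le {r : ℝ} (hr0 : 0 ≤ r) (hr1 : r ≤ 1) (a : Fin m → ZMod 2) :
    ∑ x ∈ Finset.univ.filter (· ∈ W), w r (x + a)
      ≤ ∑ x ∈ Finset.univ.filter (· ∈ W), w r x := by
  have h0 : ∑ x ∈ Finset.univ.filter (· ∈ W), w r x
      = (1 / 2 ^ m) * ∑ χ : Fin m → ZMod 2, fhat r χ * (E χ 0 * Wsum W χ) := by
    rw [← sum_coset_eq]
    exact Finset.sum_congr rfl fun x _ => by rw [add_zero]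
  rw [sum_coset_eq, h0]
  have h2m : (0:ℝ) ≤ 1 / 2 ^ m := by positivity
  refine mul_le_mul_of_nonneg_left (Finset.sum_le_sum fun χ _ => ?_) h2m
  refine mul_le_mul_of_nonneg_left ?_ (fhat_nonneg hr0 hr1 χ)
  rw [E_zero_right, one_mul]
  exact mul_le_of_le_one_left (Wsum_nonneg W χ) (E_le_one χ a)


lemma reindexf (U : Submodule (ZMod 2) (Fin m → ZMod 2)) [DecidablePred (· ∈ U)]
    (f : (Fin m → ZMod 2) → ℝ) (y : Fin m → ZMod 2) (hy : y ∈ U) :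
    ∑ x ∈ Finset.univ.filter (· ∈ U), f (y + x)
      = ∑ x ∈ Finset.univ.filter (· ∈ U), f x := by
  refine Finset.sum_nbij' (fun x => y + x) (fun x => y + x) ?_ ?_ ?_ ?_ ?_
  · intro x hx
    simp only [mem_filter, mem_univ, true_and] at hx ⊢
    exact U.add_mem hy hx
  · intro x hx
    simp only [mem_filter, mem_univ, true_and] at hx ⊢
    exact U.add_mem hy hx
  · intro x _; show y + (y + x) = x; rw [← add_assoc, add_self_fun, zero_add]
  · intro x _; show y + (y + x) = x; rw [← add_assoc, add_self_fun, zero_add]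
  · intro x _; rfl

end Stmt18Aux

open Stmt18Aux in
/-- For nested F2 subspaces W ⊆ V with dim V - dim W = Δ and a product weight
w(x) = ∏ r^{x_i} with 0 < r ≤ 1, the weight of V is at most 2^Δ times the
weight of W. -/
theorem stmt18 (m Δ : ℕ) (W V : Submodule (ZMod 2) (Fin m → ZMod 2))
    [DecidablePred (· ∈ V)] [DecidablePred (· ∈ W)]
    (hWV : W ≤ V)
    (hdim : Module.finrank (ZMod 2) V - Module.finrank (ZMod 2) W = Δ)
    (r : ℝ) (hr0 : 0 < r) (hr1 : r ≤ 1) :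
    ∑ x ∈ Finset.univ.filter (· ∈ V), ∏ i, r ^ (x i).val
      ≤ 2 ^ Δ * ∑ x ∈ Finset.univ.filter (· ∈ W), ∏ i, r ^ (x i).val := by
  classical
  have hsum : ∀ (U : Submodule (ZMod 2) (Fin m → ZMod 2)) [DecidablePred (· ∈ U)],
      ∑ x ∈ Finset.univ.filter (· ∈ U), ∏ i, r ^ (x i).val
        = ∑ x ∈ Finset.univ.filter (· ∈ U), w r x := fun U _ => rfl
  rw [hsum V, hsum W]
  set T := ∑ x ∈ Finset.univ.filter (· ∈ W), w r x with hT
  set S := ∑ x ∈ Finset.univ.filter (· ∈ V), w r x with hS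
  -- double counting
  have key : ∑ x ∈ Finset.univ.filter (· ∈ V),
      ∑ y ∈ Finset.univ.filter (· ∈ W), w r (y + x)
      ≤ ((Finset.univ.filter (· ∈ V)).card : ℝ) * T := by
    calc ∑ x ∈ Finset.univ.filter (· ∈ V),
          ∑ y ∈ Finset.univ.filter (· ∈ W), w r (y + x)
        ≤ ∑ _x ∈ Finset.univ.filter (· ∈ V), T :=
          Finset.sum_le_sum fun x _ => coset_le W hr0.le hr1 x
      _ = ((Finset.univ.filter (· ∈ V)).card : ℝ) * T := by
          rw [Finset.sum_const, nsmul_eq_mul]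
  have lhs_eq : ∑ x ∈ Finset.univ.filter (· ∈ V),
      ∑ y ∈ Finset.univ.filter (· ∈ W), w r (y + x)
      = ((Finset.univ.filter (· ∈ W)).card : ℝ) * S := by
    rw [Finset.sum_comm]
    have : ∀ y ∈ Finset.univ.filter (· ∈ W),
        ∑ x ∈ Finset.univ.filter (· ∈ V), w r (y + x) = S := by
      intro y hy
      simp only [Finset.mem_filter, Finset.mem_univ, true_and] at hy
      exact reindexf V (w r) y (hWV hy)
    rw [Finset.sum_congr rfl this, Finset.sum_const, nsmul_eq_mul]
  rw [lhs_eq] at key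
  -- cardinalities
  have hdimle : Module.finrank (ZMod 2) W ≤ Module.finrank (ZMod 2) V :=
    Submodule.finrank_mono hWV
  have hdim' : Module.finrank (ZMod 2) V = Module.finrank (ZMod 2) W + Δ := by
    omega
  have cardU : ∀ (U : Submodule (ZMod 2) (Fin m → ZMod 2)) [DecidablePred (· ∈ U)],
      (Finset.univ.filter (· ∈ U)).card = 2 ^ Module.finrank (ZMod 2) U := by
    intro U _
    rw [← Fintype.card_subtype]
    have h := Module.card_eq_pow_finrank (K := ZMod 2) (V := ↥U)
    rw [ZMod.card] at h
    rw [← h]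
  rw [cardU V, cardU W, hdim'] at key
  have hpow : (0:ℝ) < 2 ^ Module.finrank (ZMod 2) W := by positivity
  have key2 : (2:ℝ) ^ Module.finrank (ZMod 2) W * S
      ≤ 2 ^ Module.finrank (ZMod 2) W * (2 ^ Δ * T) := by
    push_cast [pow_add] at key
    linarith [key]
  exact le_of_mul_le_mul_left key2 hpow
end
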